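/- Let n > 1 be a squarefree integer and let ℓ be a positive integer such that every multiset over (ℤ/nℤ)^× of cardinality ℓ has a nonempty sub-multiset with product 1. Then every multiset over ℤ/nℤ of cardinality ℓ has a nonempty sub-multiset whose product x satisfies x·x = x. -/

import Mathlib

/-- Pull back a sub-multiset along a map. -/
lemma multiset_exists_of_le_map {α β : Type*} {f : α → β} {t : Multiset α} {s : Multiset β}
    (h : s ≤ t.map f) : ∃ w, w ≤ t ∧ w.map f = s := by
  induction s using Multiset.induction generalizing t with
  | empty => exact ⟨0, Multiset.zero_le t, rfl⟩
  | cons b s ih =>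
    have hb : b ∈ t.map f := Multiset.mem_of_le h (Multiset.mem_cons_self b s)
    obtain ⟨a, ha, rfl⟩ := Multiset.mem_map.mp hb
    obtain ⟨t', rfl⟩ := Multiset.exists_cons_of_mem ha
    rw [Multiset.map_cons] at h
    obtain ⟨w, hw, hwmap⟩ := ih ((Multiset.cons_le_cons_iff (f a)).mp h)
    exact ⟨a ::ₘ w, Multiset.cons_le_cons a hw, by rw [Multiset.map_cons, hwmap]⟩

/-- Let `n > 1` be squarefree, and let `ℓ > 0` be such that every multiset over `(ℤ/nℤ)ˣ`
of cardinality `ℓ` has a nonempty sub-multiset with product `1`.  Then every multiset over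
`ℤ/nℤ` of cardinality `ℓ` has a nonempty sub-multiset with idempotent product. -/
theorem stmt_7 (n : ℕ) (hn : 1 < n) (hsf : Squarefree n) (ℓ : ℕ) (hℓ : 0 < ℓ)
    (hD : ∀ T : Multiset (ZMod n)ˣ, T.card = ℓ →
      ∃ W : Multiset (ZMod n)ˣ, W ≤ T ∧ W ≠ 0 ∧ W.prod = 1) :
    ∀ T : Multiset (ZMod n), T.card = ℓ →
      ∃ W : Multiset (ZMod n), W ≤ T ∧ W ≠ 0 ∧ W.prod * W.prod = W.prod := by
  haveI : NeZero n := ⟨by omega⟩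
  set m := n.totient with hm_def
  have hm : 0 < m := Nat.totient_pos.mpr (by omega)
  -- Fermat-type fact modulo each prime factor
  have fermat : ∀ p : ℕ, p.Prime → p ∣ n → ∀ b : ZMod p, b ≠ 0 → b ^ m = 1 := by
    intro p hp hpn b hb
    haveI := Fact.mk hp
    have hdvd : p - 1 ∣ m := by
      have := Nat.totient_dvd_of_dvd hpn
      rwa [Nat.totient_prime hp] at this
    obtain ⟨c, hc⟩ := hdvd
    rw [hc, pow_mul, ZMod.pow_card_sub_one_eq_one hb, one_pow]
  -- injectivity: equality mod every prime factor gives equality in ZMod n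
  have inj : ∀ x : ZMod n,
      (∀ p : ℕ, (hp : p.Prime) → (h : p ∣ n) → ZMod.castHom h (ZMod p) x = 0) → x = 0 := by
    intro x hx
    have hval : ((x.val : ℕ) : ZMod n) = x := by
      simp [ZMod.natCast_val, ZMod.cast_id]
    have hdvd : n ∣ x.val := by
      have hrad := Nat.prod_primeFactors_of_squarefree hsf
      suffices h : (∏ p ∈ n.primeFactors, p) ∣ x.val by rwa [hrad] at h
      refine Finset.prod_primes_dvd _ (fun p hp => (Nat.prime_of_mem_primeFactors hp).prime)
        (fun p hp => ?_)
      have hpp := Nat.prime_of_mem_primeFactors hp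
      have hpn := Nat.dvd_of_mem_primeFactors hp
      have := hx p hpp hpn
      rw [← hval] at this
      rw [map_natCast] at this
      exact (ZMod.natCast_eq_zero_iff _ _).mp this
    rw [← hval, (ZMod.natCast_eq_zero_iff _ _).mpr hdvd]
  -- the unit associated to an element
  have key : ∀ a : ZMod n, (a + 1 - a ^ m) ^ m = 1 := by
    intro a
    have : ((a + 1 - a ^ m) ^ m - 1) = 0 := by
      apply inj
      intro p hp hpn
      haveI := Fact.mk hp
      set f := ZMod.castHom hpn (ZMod p)
      have : f ((a + 1 - a ^ m) ^ m - 1) = (f a + 1 - f a ^ m) ^ m - 1 := by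
        push_cast [map_sub, map_pow, map_add, map_one]
        ring
      rw [this]
      by_cases hb : f a = 0
      · rw [hb]
        simp [zero_pow hm.ne', one_pow]
      · rw [fermat p hp hpn (f a) hb]
        simp [fermat p hp hpn (f a) hb]
    linear_combination this
  let u : ZMod n → (ZMod n)ˣ := fun a =>
    ⟨a + 1 - a ^ m, (a + 1 - a ^ m) ^ (m - 1),
      by rw [← pow_succ', Nat.sub_add_cancel hm]; exact key a,
      by rw [← pow_succ, Nat.sub_add_cancel hm]; exact key a⟩
  intro T hT
  obtain ⟨W', hW'le, hW'ne, hW'prod⟩ := hD (T.map u) (by rw [Multiset.card_map, hT])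
  obtain ⟨W, hWle, hWmap⟩ := multiset_exists_of_le_map hW'le
  refine ⟨W, hWle, ?_, ?_⟩
  · intro h
    rw [h] at hWmap
    exact hW'ne (hWmap.symm.trans rfl)
  · -- products
    have hprod : (W.map (fun a => a + 1 - a ^ m)).prod = 1 := by
      calc (W.map fun a => a + 1 - a ^ m).prod
          = ((W.map u).prod : ZMod n) := by
            rw [← Units.coeHom_apply, MonoidHom.map_multiset_prod, Multiset.map_map]
            rfl
        _ = 1 := by rw [hWmap, hW'prod]; rfl
    -- show idempotency via injectivity
    have : W.prod * W.prod - W.prod = 0 := by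
      apply inj
      intro p hp hpn
      haveI := Fact.mk hp
      set f := ZMod.castHom hpn (ZMod p) with hf
      have hfprod : f W.prod = (W.map (fun a => f a)).prod := map_multiset_prod f W
      by_cases hz : ∃ a ∈ W, f a = 0
      · obtain ⟨a, haW, hfa⟩ := hz
        have : f W.prod = 0 := by
          rw [hfprod]
          exact Multiset.prod_eq_zero (Multiset.mem_map.mpr ⟨a, haW, hfa⟩)
        rw [map_sub, map_mul, this, mul_zero, sub_zero]
      · push_neg at hz
        have h1 : f W.prod = 1 := by
          have := congrArg f hprod
          rw [map_multiset_prod f, Multiset.map_map, map_one] at this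
          rw [hfprod, ← this]
          congr 1
          apply Multiset.map_congr rfl
          intro a ha
          have hfa := hz a ha
          simp only [Function.comp_apply, map_sub, map_add, map_pow, map_one]
          rw [fermat p hp hpn (f a) hfa]
          ring
        rw [map_sub, map_mul, h1, mul_one, sub_self]
    linear_combination this
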